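/- If v ∈ ℝ³ is nonzero and the orbit G_tet·v = {A·v : A ∈ G_tet} has exactly 4 elements, then these 4 points are pairwise equidistant: there exists d > 0 such that dist(p, q) = d for all distinct p, q ∈ G_tet·v (i.e., the orbit forms a regular tetrahedron). -/

import Mathlib

open Matrix

/-- A 3×3 real matrix is a rotation if it is orthogonal with determinant 1. -/
def IsRotation (A : Matrix (Fin 3) (Fin 3) ℝ) : Prop := Aᵀ * A = 1 ∧ A.det = 1

/-- The action of a 3×3 matrix on ℝ³ by matrix–vector multiplication. -/
noncomputable def act (A : Matrix (Fin 3) (Fin 3) ℝ) (v : EuclideanSpace ℝ (Fin 3)) :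
    EuclideanSpace ℝ (Fin 3) := WithLp.toLp 2 (A.mulVec v)

/-- The orbit of a point under a set of matrices. -/
def orb (G : Set (Matrix (Fin 3) (Fin 3) ℝ)) (v : EuclideanSpace ℝ (Fin 3)) :
    Set (EuclideanSpace ℝ (Fin 3)) := {q | ∃ A ∈ G, act A v = q}

/-- The vertices of a regular tetrahedron inscribed in the cube [−1,1]³. -/
noncomputable def Vtet : Set (EuclideanSpace ℝ (Fin 3)) :=
  {!₂[1, 1, 1], !₂[1, -1, -1], !₂[-1, 1, -1], !₂[-1, -1, 1]}

/-- The tetrahedral rotation group: all rotations preserving `Vtet` setwise. -/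
noncomputable def Gtet : Set (Matrix (Fin 3) (Fin 3) ℝ) :=
  {A | IsRotation A ∧ act A '' Vtet = Vtet}

/-! ### Auxiliary material -/

namespace TetAux

noncomputable def C : Matrix (Fin 3) (Fin 3) ℝ := !![0,0,1;1,0,0;0,1,0]
noncomputable def T1 : Matrix (Fin 3) (Fin 3) ℝ := !![1,0,0;0,-1,0;0,0,-1]
noncomputable def T2 : Matrix (Fin 3) (Fin 3) ℝ := !![-1,0,0;0,1,0;0,0,-1]
noncomputable def T3 : Matrix (Fin 3) (Fin 3) ℝ := !![-1,0,0;0,-1,0;0,0,1]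

lemma act_C (v : EuclideanSpace ℝ (Fin 3)) : act C v = !₂[v 2, v 0, v 1] := by
  ext i; fin_cases i <;>
    simp [act, C, Matrix.mulVec, dotProduct, Fin.sum_univ_three]

lemma act_T1 (v : EuclideanSpace ℝ (Fin 3)) : act T1 v = !₂[v 0, -v 1, -v 2] := by
  ext i; fin_cases i <;>
    simp [act, T1, Matrix.mulVec, dotProduct, Fin.sum_univ_three]

lemma act_T2 (v : EuclideanSpace ℝ (Fin 3)) : act T2 v = !₂[-v 0, v 1, -v 2] := by
  ext i; fin_cases i <;>
    simp [act, T2, Matrix.mulVec, dotProduct, Fin.sum_univ_three]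

lemma act_T3 (v : EuclideanSpace ℝ (Fin 3)) : act T3 v = !₂[-v 0, -v 1, v 2] := by
  ext i; fin_cases i <;>
    simp [act, T3, Matrix.mulVec, dotProduct, Fin.sum_univ_three]

lemma act_C' (a b c : ℝ) : act C !₂[a,b,c] = !₂[c,a,b] := by
  rw [act_C]; norm_num [Matrix.cons_val_two]

lemma act_T1' (a b c : ℝ) : act T1 !₂[a,b,c] = !₂[a,-b,-c] := by
  rw [act_T1]; norm_num [Matrix.cons_val_two]

lemma act_T2' (a b c : ℝ) : act T2 !₂[a,b,c] = !₂[-a,b,-c] := by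
  rw [act_T2]; norm_num [Matrix.cons_val_two]

lemma act_T3' (a b c : ℝ) : act T3 !₂[a,b,c] = !₂[-a,-b,c] := by
  rw [act_T3]; norm_num [Matrix.cons_val_two]

lemma veq {a b c a' b' c' : ℝ} (h : (!₂[a,b,c] : EuclideanSpace ℝ (Fin 3)) = !₂[a',b',c']) :
    a = a' ∧ b = b' ∧ c = c' := by
  have := congrArg (fun w : EuclideanSpace ℝ (Fin 3) => (w 0, w 1, w 2)) h; simpa using this

lemma vne {a b c a' b' c' : ℝ} (h : ¬ (a = a' ∧ b = b' ∧ c = c')) :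
    (!₂[a,b,c] : EuclideanSpace ℝ (Fin 3)) ≠ !₂[a',b',c'] := fun he => h (veq he)

lemma C_mem : C ∈ Gtet := by
  refine ⟨⟨?_, ?_⟩, ?_⟩
  · ext i j; fin_cases i <;> fin_cases j <;>
      simp [C, Matrix.mul_apply, Matrix.transpose_apply, Fin.sum_univ_three, Matrix.one_apply,
        Matrix.vecHead, Matrix.vecTail]
  · simp [C, Matrix.det_fin_three]
  · show act C '' {_, _, _, _} = _
    rw [Set.image_insert_eq, Set.image_insert_eq, Set.image_insert_eq, Set.image_singleton,
      act_C', act_C', act_C', act_C']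
    show ({!₂[1,1,1], !₂[-1,1,-1], !₂[-1,-1,1], !₂[1,-1,-1]} : Set (EuclideanSpace ℝ (Fin 3))) = _
    unfold Vtet
    ext w
    simp only [Set.mem_insert_iff, Set.mem_singleton_iff]
    tauto

lemma T1_mem : T1 ∈ Gtet := by
  refine ⟨⟨?_, ?_⟩, ?_⟩
  · ext i j; fin_cases i <;> fin_cases j <;>
      simp [T1, Matrix.mul_apply, Matrix.transpose_apply, Fin.sum_univ_three, Matrix.one_apply,
        Matrix.vecHead, Matrix.vecTail]
  · simp [T1, Matrix.det_fin_three]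
  · show act T1 '' {_, _, _, _} = _
    rw [Set.image_insert_eq, Set.image_insert_eq, Set.image_insert_eq, Set.image_singleton,
      act_T1', act_T1', act_T1', act_T1']
    norm_num
    show ({!₂[1,-1,-1], !₂[1,1,1], !₂[-1,-1,1], !₂[-1,1,-1]} : Set (EuclideanSpace ℝ (Fin 3))) = _
    unfold Vtet
    ext w
    simp only [Set.mem_insert_iff, Set.mem_singleton_iff]
    tauto

lemma T2_mem : T2 ∈ Gtet := by
  refine ⟨⟨?_, ?_⟩, ?_⟩
  · ext i j; fin_cases i <;> fin_cases j <;>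
      simp [T2, Matrix.mul_apply, Matrix.transpose_apply, Fin.sum_univ_three, Matrix.one_apply,
        Matrix.vecHead, Matrix.vecTail]
  · simp [T2, Matrix.det_fin_three]
  · show act T2 '' {_, _, _, _} = _
    rw [Set.image_insert_eq, Set.image_insert_eq, Set.image_insert_eq, Set.image_singleton,
      act_T2', act_T2', act_T2', act_T2']
    norm_num
    show ({!₂[-1,1,-1], !₂[-1,-1,1], !₂[1,1,1], !₂[1,-1,-1]} : Set (EuclideanSpace ℝ (Fin 3))) = _
    unfold Vtet
    ext w
    simp only [Set.mem_insert_iff, Set.mem_singleton_iff]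
    tauto

lemma T3_mem : T3 ∈ Gtet := by
  refine ⟨⟨?_, ?_⟩, ?_⟩
  · ext i j; fin_cases i <;> fin_cases j <;>
      simp [T3, Matrix.mul_apply, Matrix.transpose_apply, Fin.sum_univ_three, Matrix.one_apply,
        Matrix.vecHead, Matrix.vecTail]
  · simp [T3, Matrix.det_fin_three]
  · show act T3 '' {_, _, _, _} = _
    rw [Set.image_insert_eq, Set.image_insert_eq, Set.image_insert_eq, Set.image_singleton,
      act_T3', act_T3', act_T3', act_T3']
    norm_num
    show ({!₂[-1,-1,1], !₂[-1,1,-1], !₂[1,-1,-1], !₂[1,1,1]} : Set (EuclideanSpace ℝ (Fin 3))) = _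
    unfold Vtet
    ext w
    simp only [Set.mem_insert_iff, Set.mem_singleton_iff]
    tauto

lemma one_mem : (1 : Matrix (Fin 3) (Fin 3) ℝ) ∈ Gtet := by
  refine ⟨⟨by simp, by simp⟩, ?_⟩
  have : act (1 : Matrix (Fin 3) (Fin 3) ℝ) = id := by
    funext w; simp [act, Matrix.one_mulVec]
  rw [this, Set.image_id]

lemma act_mul (A B : Matrix (Fin 3) (Fin 3) ℝ) (v : EuclideanSpace ℝ (Fin 3)) :
    act (A * B) v = act A (act B v) := by
  simp [act, Matrix.mulVec_mulVec]

lemma mul_mem {A B : Matrix (Fin 3) (Fin 3) ℝ} (hA : A ∈ Gtet) (hB : B ∈ Gtet) :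
    A * B ∈ Gtet := by
  obtain ⟨⟨hA1, hA2⟩, hA3⟩ := hA
  obtain ⟨⟨hB1, hB2⟩, hB3⟩ := hB
  refine ⟨⟨?_, ?_⟩, ?_⟩
  · rw [Matrix.transpose_mul]
    calc Bᵀ * Aᵀ * (A * B) = Bᵀ * (Aᵀ * A) * B := by
          simp only [Matrix.mul_assoc]
    _ = 1 := by rw [hA1, Matrix.mul_one, hB1]
  · rw [Matrix.det_mul, hA2, hB2, mul_one]
  · rw [show act (A * B) = act A ∘ act B from funext (act_mul A B), Set.image_comp,
      hB3, hA3]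

/-- membership step: orbits are `Gtet`-invariant. -/
lemma step {v w : EuclideanSpace ℝ (Fin 3)} {A : Matrix (Fin 3) (Fin 3) ℝ}
    (hA : A ∈ Gtet) (hw : w ∈ orb Gtet v) : act A w ∈ orb Gtet v := by
  obtain ⟨B, hB, rfl⟩ := hw
  exact ⟨A * B, mul_mem hA hB, act_mul A B v⟩

/-- A set of `ncard` 4 cannot contain 5 pairwise distinct points. -/
lemma five {S : Set (EuclideanSpace ℝ (Fin 3))} (hfin : S.Finite) (hcard : S.ncard = 4)
    {a b c d e : EuclideanSpace ℝ (Fin 3)}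
    (ha : a ∈ S) (hb : b ∈ S) (hc : c ∈ S) (hd : d ∈ S) (he : e ∈ S)
    (h1 : a ≠ b) (h2 : a ≠ c) (h3 : a ≠ d) (h4 : a ≠ e)
    (h5 : b ≠ c) (h6 : b ≠ d) (h7 : b ≠ e)
    (h8 : c ≠ d) (h9 : c ≠ e) (h10 : d ≠ e) : False := by
  have hsub : ({a, b, c, d, e} : Set (EuclideanSpace ℝ (Fin 3))) ⊆ S := by
    intro w hw
    simp only [Set.mem_insert_iff, Set.mem_singleton_iff] at hw
    rcases hw with rfl | rfl | rfl | rfl | rfl <;> assumption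
  have h5card : ({a, b, c, d, e} : Set (EuclideanSpace ℝ (Fin 3))).ncard = 5 := by
    rw [Set.ncard_insert_of_notMem (by simp [h1, h2, h3, h4]),
      Set.ncard_insert_of_notMem (by simp [h5, h6, h7]),
      Set.ncard_insert_of_notMem (by simp [h8, h9]),
      Set.ncard_insert_of_notMem (by simp [h10]), Set.ncard_singleton]
  have := Set.ncard_le_ncard hsub hfin
  omega

end TetAux

/-- If the orbit of a nonzero vector under the tetrahedral rotation group has exactly
4 elements, then these 4 points are pairwise equidistant, i.e. they form a regular
tetrahedron. -/
theorem tetrahedral_orbit_four_is_regular_tetrahedron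
    (v : EuclideanSpace ℝ (Fin 3)) (hv : v ≠ 0) (hcard : (orb Gtet v).ncard = 4) :
    ∃ d : ℝ, 0 < d ∧
      ∀ p ∈ orb Gtet v, ∀ q ∈ orb Gtet v, p ≠ q → dist p q = d := by
  open TetAux in
  set S := orb Gtet v with hSdef
  obtain ⟨x, y, z, hv3⟩ : ∃ x y z : ℝ, v = !₂[x, y, z] :=
    ⟨v 0, v 1, v 2, by ext i; fin_cases i <;> rfl⟩
  have hfin : S.Finite := by
    by_contra h
    rw [Set.Infinite.ncard h] at hcard
    omega
  have hvS : v ∈ S := ⟨1, TetAux.one_mem, by simp [act, Matrix.one_mulVec]⟩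
  have hm0 : (!₂[x, y, z] : EuclideanSpace ℝ (Fin 3)) ∈ S := hv3 ▸ hvS
  have hm1 : (!₂[x, -y, -z] : EuclideanSpace ℝ (Fin 3)) ∈ S := by
    simpa [TetAux.act_T1'] using TetAux.step TetAux.T1_mem hm0
  have hm2 : (!₂[-x, y, -z] : EuclideanSpace ℝ (Fin 3)) ∈ S := by
    simpa [TetAux.act_T2'] using TetAux.step TetAux.T2_mem hm0
  have hm3 : (!₂[-x, -y, z] : EuclideanSpace ℝ (Fin 3)) ∈ S := by
    simpa [TetAux.act_T3'] using TetAux.step TetAux.T3_mem hm0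
  have hmc : (!₂[z, x, y] : EuclideanSpace ℝ (Fin 3)) ∈ S := by
    simpa [TetAux.act_C'] using TetAux.step TetAux.C_mem hm0
  have hmcc : (!₂[y, z, x] : EuclideanSpace ℝ (Fin 3)) ∈ S := by
    simpa [TetAux.act_C'] using TetAux.step TetAux.C_mem hmc
  by_cases hx : x = 0 <;> by_cases hy : y = 0 <;> by_cases hz : z = 0
  -- all zero: contradicts v ≠ 0
  · exact absurd (by rw [hv3, hx, hy, hz]; ext i; fin_cases i <;> rfl) hv
  -- x = 0, y = 0, z ≠ 0
  · exfalso
    subst hx hy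
    have e2 : (!₂[(0:ℝ), 0, -z] : EuclideanSpace ℝ (Fin 3)) ∈ S := by simpa using hm1
    have e4 : (!₂[-z, (0:ℝ), 0] : EuclideanSpace ℝ (Fin 3)) ∈ S := by
      simpa [TetAux.act_T2'] using TetAux.step TetAux.T2_mem hmc
    exact TetAux.five hfin hcard hm0 e2 hmc e4 hmcc
      (TetAux.vne (by rintro ⟨-, -, h⟩; exact hz (by linarith)))
      (TetAux.vne (by rintro ⟨h, -, -⟩; exact hz h.symm))
      (TetAux.vne (by rintro ⟨h, -, -⟩; exact hz (by linarith)))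
      (TetAux.vne (by rintro ⟨-, h, -⟩; exact hz h.symm))
      (TetAux.vne (by rintro ⟨h, -, -⟩; exact hz h.symm))
      (TetAux.vne (by rintro ⟨h, -, -⟩; exact hz (by linarith)))
      (TetAux.vne (by rintro ⟨-, h, -⟩; exact hz h.symm))
      (TetAux.vne (by rintro ⟨h, -, -⟩; exact hz (by linarith)))
      (TetAux.vne (by rintro ⟨-, h, -⟩; exact hz h.symm))
      (TetAux.vne (by rintro ⟨-, h, -⟩; exact hz h.symm))
  -- x = 0, y ≠ 0, z = 0
  · exfalso
    subst hx hz
    have e2 : (!₂[(0:ℝ), -y, 0] : EuclideanSpace ℝ (Fin 3)) ∈ S := by simpa using hm1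
    have e3 : (!₂[(0:ℝ), 0, y] : EuclideanSpace ℝ (Fin 3)) ∈ S := by simpa using hmc
    have e4 : (!₂[(0:ℝ), 0, -y] : EuclideanSpace ℝ (Fin 3)) ∈ S := by
      simpa [TetAux.act_T1'] using TetAux.step TetAux.T1_mem e3
    have e5 : (!₂[y, (0:ℝ), 0] : EuclideanSpace ℝ (Fin 3)) ∈ S := by
      simpa [TetAux.act_C'] using TetAux.step TetAux.C_mem e3
    exact TetAux.five hfin hcard hm0 e2 e3 e4 e5
      (TetAux.vne (by rintro ⟨-, h, -⟩; exact hy (by linarith)))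
      (TetAux.vne (by rintro ⟨-, h, -⟩; exact hy h))
      (TetAux.vne (by rintro ⟨-, h, -⟩; exact hy h))
      (TetAux.vne (by rintro ⟨-, h, -⟩; exact hy h))
      (TetAux.vne (by rintro ⟨-, -, h⟩; exact hy (by linarith)))
      (TetAux.vne (by rintro ⟨-, h, -⟩; exact hy (by linarith)))
      (TetAux.vne (by rintro ⟨h, -, -⟩; exact hy h.symm))
      (TetAux.vne (by rintro ⟨-, -, h⟩; exact hy (by linarith)))
      (TetAux.vne (by rintro ⟨h, -, -⟩; exact hy h.symm))
      (TetAux.vne (by rintro ⟨h, -, -⟩; exact hy h.symm))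
  -- x = 0, y ≠ 0, z ≠ 0
  · exfalso
    subst hx
    have e3 : (!₂[(0:ℝ), y, -z] : EuclideanSpace ℝ (Fin 3)) ∈ S := by simpa using hm2
    have e4 : (!₂[(0:ℝ), -y, z] : EuclideanSpace ℝ (Fin 3)) ∈ S := by simpa using hm3
    exact TetAux.five hfin hcard hm0 hm1 e3 e4 hmc
      (TetAux.vne (by rintro ⟨-, h, -⟩; exact hy (by linarith)))
      (TetAux.vne (by rintro ⟨-, -, h⟩; exact hz (by linarith)))
      (TetAux.vne (by rintro ⟨-, h, -⟩; exact hy (by linarith)))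
      (TetAux.vne (by rintro ⟨h, -, -⟩; exact hz h.symm))
      (TetAux.vne (by rintro ⟨-, h, -⟩; exact hy (by linarith)))
      (TetAux.vne (by rintro ⟨-, -, h⟩; exact hz (by linarith)))
      (TetAux.vne (by rintro ⟨h, -, -⟩; exact hz h.symm))
      (TetAux.vne (by rintro ⟨-, h, -⟩; exact hy (by linarith)))
      (TetAux.vne (by rintro ⟨h, -, -⟩; exact hz h.symm))
      (TetAux.vne (by rintro ⟨h, -, -⟩; exact hz h.symm))
  -- x ≠ 0, y = 0, z = 0
  · exfalso
    subst hy hz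
    have e2 : (!₂[-x, (0:ℝ), 0] : EuclideanSpace ℝ (Fin 3)) ∈ S := by simpa using hm3
    have e3 : (!₂[(0:ℝ), x, 0] : EuclideanSpace ℝ (Fin 3)) ∈ S := by simpa using hmc
    have e4 : (!₂[(0:ℝ), -x, 0] : EuclideanSpace ℝ (Fin 3)) ∈ S := by
      simpa [TetAux.act_T3'] using TetAux.step TetAux.T3_mem e3
    have e5 : (!₂[(0:ℝ), 0, x] : EuclideanSpace ℝ (Fin 3)) ∈ S := by
      simpa [TetAux.act_C'] using TetAux.step TetAux.C_mem e3
    exact TetAux.five hfin hcard hm0 e2 e3 e4 e5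
      (TetAux.vne (by rintro ⟨h, -, -⟩; exact hx (by linarith)))
      (TetAux.vne (by rintro ⟨h, -, -⟩; exact hx h))
      (TetAux.vne (by rintro ⟨h, -, -⟩; exact hx h))
      (TetAux.vne (by rintro ⟨h, -, -⟩; exact hx h))
      (TetAux.vne (by rintro ⟨-, h, -⟩; exact hx h.symm))
      (TetAux.vne (by rintro ⟨-, h, -⟩; exact hx (by linarith)))
      (TetAux.vne (by rintro ⟨-, -, h⟩; exact hx h.symm))
      (TetAux.vne (by rintro ⟨-, h, -⟩; exact hx (by linarith)))
      (TetAux.vne (by rintro ⟨-, -, h⟩; exact hx h.symm))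
      (TetAux.vne (by rintro ⟨-, -, h⟩; exact hx h.symm))
  -- x ≠ 0, y = 0, z ≠ 0
  · exfalso
    subst hy
    have e2 : (!₂[x, (0:ℝ), -z] : EuclideanSpace ℝ (Fin 3)) ∈ S := by simpa using hm1
    have e4 : (!₂[-x, (0:ℝ), z] : EuclideanSpace ℝ (Fin 3)) ∈ S := by simpa using hm3
    exact TetAux.five hfin hcard hm0 e2 hm2 e4 hmc
      (TetAux.vne (by rintro ⟨-, -, h⟩; exact hz (by linarith)))
      (TetAux.vne (by rintro ⟨h, -, -⟩; exact hx (by linarith)))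
      (TetAux.vne (by rintro ⟨h, -, -⟩; exact hx (by linarith)))
      (TetAux.vne (by rintro ⟨-, h, -⟩; exact hx h.symm))
      (TetAux.vne (by rintro ⟨h, -, -⟩; exact hx (by linarith)))
      (TetAux.vne (by rintro ⟨h, -, -⟩; exact hx (by linarith)))
      (TetAux.vne (by rintro ⟨-, h, -⟩; exact hx h.symm))
      (TetAux.vne (by rintro ⟨-, -, h⟩; exact hz (by linarith)))
      (TetAux.vne (by rintro ⟨-, h, -⟩; exact hx h.symm))
      (TetAux.vne (by rintro ⟨-, h, -⟩; exact hx h.symm))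
  -- x ≠ 0, y ≠ 0, z = 0
  · exfalso
    subst hz
    have e2 : (!₂[x, -y, (0:ℝ)] : EuclideanSpace ℝ (Fin 3)) ∈ S := by simpa using hm1
    have e3 : (!₂[-x, y, (0:ℝ)] : EuclideanSpace ℝ (Fin 3)) ∈ S := by simpa using hm2
    have e5 : (!₂[(0:ℝ), x, y] : EuclideanSpace ℝ (Fin 3)) ∈ S := by simpa using hmc
    exact TetAux.five hfin hcard hm0 e2 e3 hm3 e5
      (TetAux.vne (by rintro ⟨-, h, -⟩; exact hy (by linarith)))
      (TetAux.vne (by rintro ⟨h, -, -⟩; exact hx (by linarith)))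
      (TetAux.vne (by rintro ⟨h, -, -⟩; exact hx (by linarith)))
      (TetAux.vne (by rintro ⟨h, -, -⟩; exact hx h))
      (TetAux.vne (by rintro ⟨h, -, -⟩; exact hx (by linarith)))
      (TetAux.vne (by rintro ⟨h, -, -⟩; exact hx (by linarith)))
      (TetAux.vne (by rintro ⟨h, -, -⟩; exact hx h))
      (TetAux.vne (by rintro ⟨-, h, -⟩; exact hy (by linarith)))
      (TetAux.vne (by rintro ⟨h, -, -⟩; exact hx (by linarith)))
      (TetAux.vne (by rintro ⟨h, -, -⟩; exact hx (by linarith)))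
  -- main case: x ≠ 0, y ≠ 0, z ≠ 0
  · have d01 : (!₂[x, y, z] : EuclideanSpace ℝ (Fin 3)) ≠ !₂[x, -y, -z] :=
      TetAux.vne (by rintro ⟨-, h, -⟩; exact hy (by linarith))
    have d02 : (!₂[x, y, z] : EuclideanSpace ℝ (Fin 3)) ≠ !₂[-x, y, -z] :=
      TetAux.vne (by rintro ⟨h, -, -⟩; exact hx (by linarith))
    have d03 : (!₂[x, y, z] : EuclideanSpace ℝ (Fin 3)) ≠ !₂[-x, -y, z] :=
      TetAux.vne (by rintro ⟨h, -, -⟩; exact hx (by linarith))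
    have d12 : (!₂[x, -y, -z] : EuclideanSpace ℝ (Fin 3)) ≠ !₂[-x, y, -z] :=
      TetAux.vne (by rintro ⟨h, -, -⟩; exact hx (by linarith))
    have d13 : (!₂[x, -y, -z] : EuclideanSpace ℝ (Fin 3)) ≠ !₂[-x, -y, z] :=
      TetAux.vne (by rintro ⟨h, -, -⟩; exact hx (by linarith))
    have d23 : (!₂[-x, y, -z] : EuclideanSpace ℝ (Fin 3)) ≠ !₂[-x, -y, z] :=
      TetAux.vne (by rintro ⟨-, h, -⟩; exact hy (by linarith))
    have hsub : ({!₂[x,y,z], !₂[x,-y,-z], !₂[-x,y,-z], !₂[-x,-y,z]} :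
        Set (EuclideanSpace ℝ (Fin 3))) ⊆ S := by
      intro w hw
      simp only [Set.mem_insert_iff, Set.mem_singleton_iff] at hw
      rcases hw with rfl | rfl | rfl | rfl <;> assumption
    have hc4 : ({!₂[x,y,z], !₂[x,-y,-z], !₂[-x,y,-z], !₂[-x,-y,z]} :
        Set (EuclideanSpace ℝ (Fin 3))).ncard = 4 := by
      rw [Set.ncard_insert_of_notMem (by simp [d01, d02, d03]),
        Set.ncard_insert_of_notMem (by simp [d12, d13]),
        Set.ncard_insert_of_notMem (by simp [d23]), Set.ncard_singleton]
    have hTS : ({!₂[x,y,z], !₂[x,-y,-z], !₂[-x,y,-z], !₂[-x,-y,z]} :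
        Set (EuclideanSpace ℝ (Fin 3))) = S :=
      Set.eq_of_subset_of_ncard_le hsub (by rw [hcard, hc4]) hfin
    -- derive x² = y² = z² from c·v ∈ S
    have hc' : (!₂[z, x, y] : EuclideanSpace ℝ (Fin 3)) ∈
        ({!₂[x,y,z], !₂[x,-y,-z], !₂[-x,y,-z], !₂[-x,-y,z]} :
          Set (EuclideanSpace ℝ (Fin 3))) := hTS ▸ hmc
    simp only [Set.mem_insert_iff, Set.mem_singleton_iff] at hc'
    have hsq : y ^ 2 = x ^ 2 ∧ z ^ 2 = x ^ 2 := by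
      rcases hc' with h | h | h | h <;> obtain ⟨h1, h2, h3⟩ := TetAux.veq h
      · exact ⟨by rw [← h2], by rw [h1]⟩
      · exact ⟨by rw [show y = -x by linarith]; ring, by rw [h1]⟩
      · exact ⟨by rw [← h2], by rw [h1]; ring⟩
      · exact ⟨by rw [show y = -x by linarith]; ring, by rw [h1]; ring⟩
    obtain ⟨hy2, hz2⟩ := hsq
    refine ⟨Real.sqrt (8 * x ^ 2), ?_, ?_⟩
    · have h8 : (0:ℝ) < 8 * x ^ 2 := by
        rcases lt_or_gt_of_ne hx with h | h <;> nlinarith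
      exact Real.sqrt_pos.mpr h8
    · intro p hp q hq hpq
      rw [← hTS] at hp hq
      simp only [Set.mem_insert_iff, Set.mem_singleton_iff] at hp hq
      rcases hp with rfl | rfl | rfl | rfl <;> rcases hq with rfl | rfl | rfl | rfl <;>
        first
          | exact absurd rfl hpq
          | (rw [EuclideanSpace.dist_eq]
             congr 1
             simp only [Fin.sum_univ_three, Real.dist_eq, sq_abs,
               Matrix.cons_val_zero, Matrix.cons_val_one, Matrix.head_cons,
               Matrix.cons_val_two, Matrix.tail_cons]
             ring_nf
             linarith [hy2, hz2])
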